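/- Let E be a module over L⁰ and K ⊆ E an L⁰-convex and L⁰-absorbent set. Let X ∈ E and A ∈ ℱ. If a ∈ L⁰ is a greatest lower bound (a.e. order) of {Y ∈ L⁰₊ : X ∈ Y•K} and b ∈ L⁰ is a greatest lower bound of {Y ∈ L⁰₊ : 1_A•X ∈ Y•K}, then 1_A·b = 1_A·a (i.e., 1_A·p_K(1_A X) = 1_A·p_K(X)). -/

import Mathlib

open MeasureTheory Filter Pointwise

variable {Ω : Type*} [MeasurableSpace Ω] (P : MeasureTheory.Measure Ω ) [IsProbabilityMeasure P]

noncomputable instance : CommRing (Ω →ₘ[P] ℝ) :=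
  { (inferInstance : AddCommGroup (Ω →ₘ[P] ℝ)),
    (inferInstance : CommMonoid (Ω →ₘ[P] ℝ)) with
    left_distrib := fun f g h => AEEqFun.ext (by
      filter_upwards [AEEqFun.coeFn_mul f (g + h), AEEqFun.coeFn_add g h,
        AEEqFun.coeFn_add (f * g) (f * h), AEEqFun.coeFn_mul f g, AEEqFun.coeFn_mul f h]
        with ω h1 h2 h3 h4 h5
      simp only [Pi.mul_apply, Pi.add_apply] at *
      rw [h1, h2, h3, h4, h5, mul_add])
    right_distrib := fun f g h => AEEqFun.ext (by
      filter_upwards [AEEqFun.coeFn_mul (f + g) h, AEEqFun.coeFn_add f g,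
        AEEqFun.coeFn_add (f * h) (g * h), AEEqFun.coeFn_mul f h, AEEqFun.coeFn_mul g h]
        with ω h1 h2 h3 h4 h5
      simp only [Pi.mul_apply, Pi.add_apply] at *
      rw [h1, h2, h3, h4, h5, add_mul])
    zero_mul := fun f => AEEqFun.ext (by
      filter_upwards [AEEqFun.coeFn_mul 0 f, AEEqFun.coeFn_zero (β := ℝ) (μ := P)]
        with ω h1 h2
      simp only [Pi.mul_apply, Pi.zero_apply] at *
      rw [h1, h2, zero_mul])
    mul_zero := fun f => AEEqFun.ext (by
      filter_upwards [AEEqFun.coeFn_mul f 0, AEEqFun.coeFn_zero (β := ℝ) (μ := P)]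
        with ω h1 h2
      simp only [Pi.mul_apply, Pi.zero_apply] at *
      rw [h1, h2, mul_zero]) }

/-- `L⁰₊₊`: the set of a.e. strictly positive elements. -/
def L0pp (Y : Ω →ₘ[P] ℝ) : Prop := ∀ᵐ ω ∂P, 0 < Y ω

/-- The equivalence class of the indicator function of a measurable set. -/
noncomputable def ind (A : Set Ω) (hA : MeasurableSet A) : Ω →ₘ[P] ℝ :=
  AEEqFun.mk (A.indicator fun _ => (1 : ℝ)) (aestronglyMeasurable_const.indicator hA)

section ModuleDefs

variable {E : Type*} [AddCommGroup E] [Module (Ω →ₘ[P] ℝ) E]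

/-- `L⁰`-convexity of a subset of an `L⁰`-module. -/
def IsL0Convex (U : Set E) : Prop :=
  ∀ X₁ ∈ U, ∀ X₂ ∈ U, ∀ Y : Ω →ₘ[P] ℝ, 0 ≤ Y → Y ≤ 1 → Y • X₁ + (1 - Y) • X₂ ∈ U

/-- `L⁰`-absorbency of a subset of an `L⁰`-module. -/
def IsL0Absorbent (U : Set E) : Prop :=
  ∀ X : E, ∃ Y : Ω →ₘ[P] ℝ, L0pp P Y ∧ X ∈ Y • U

/-- `L⁰`-balancedness of a subset of an `L⁰`-module. -/
def IsL0Balanced (U : Set E) : Prop :=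
  ∀ X ∈ U, ∀ Y : Ω →ₘ[P] ℝ, |Y| ≤ 1 → Y • X ∈ U

/-- Closedness under countable concatenations. -/
def IsConcatClosed (C : Set E) : Prop :=
  ∀ (A : ℕ → Set Ω) (hA : ∀ n, MeasurableSet (A n)),
    Pairwise (Function.onFun Disjoint A) → (⋃ n, A n) = Set.univ →
    ∀ X : E, (∀ n, ∃ Xn ∈ C, ind P (A n) (hA n) • X = ind P (A n) (hA n) • Xn) → X ∈ C

/-- `L⁰`-seminorm. -/
def IsL0Seminorm (p : E → (Ω →ₘ[P] ℝ)) : Prop :=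
  (∀ X : E, 0 ≤ p X) ∧ (∀ (Y : Ω →ₘ[P] ℝ) (X : E), p (Y • X) = |Y| * p X) ∧
    (∀ X₁ X₂ : E, p (X₁ + X₂) ≤ p X₁ + p X₂)

/-- The set whose essential infimum is the gauge `p_K(X)`. -/
def gaugeSet (K : Set E) (X : E) : Set (Ω →ₘ[P] ℝ) :=
  {Y : Ω →ₘ[P] ℝ | 0 ≤ Y ∧ X ∈ Y • K}

end ModuleDefs

section Aux

/-- Pointwise a.e. inverse in `L⁰`. -/
noncomputable def ainv (f : Ω →ₘ[P] ℝ) : Ω →ₘ[P] ℝ :=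
  AEEqFun.mk (fun ω => (f ω)⁻¹)
    (f.aestronglyMeasurable.aemeasurable.inv.aestronglyMeasurable)

lemma ainv_coe (f : Ω →ₘ[P] ℝ) : ⇑(ainv P f) =ᵐ[P] fun ω => (f ω)⁻¹ :=
  AEEqFun.coeFn_mk _ _

lemma ind_coe (A : Set Ω) (hA : MeasurableSet A) :
    ⇑(ind P A hA) =ᵐ[P] A.indicator (fun _ => (1 : ℝ)) :=
  AEEqFun.coeFn_mk _ _

lemma ainv_mul_self {f : Ω →ₘ[P] ℝ} (hf : L0pp P f) : ainv P f * f = 1 := by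
  apply AEEqFun.ext
  filter_upwards [AEEqFun.coeFn_mul (ainv P f) f, ainv_coe P f, hf,
    AEEqFun.coeFn_one (β := ℝ) (μ := P)] with ω h1 h2 h3 h4
  rw [h1, Pi.mul_apply, h2, h4, Pi.one_apply]
  exact inv_mul_cancel₀ (ne_of_gt h3)

lemma zero_mem_of_absorbent {E : Type*} [AddCommGroup E] [Module (Ω →ₘ[P] ℝ) E]
    {K : Set E} (habs : IsL0Absorbent P K) : (0 : E) ∈ K := by
  obtain ⟨Y, hY, hmem⟩ := habs 0
  obtain ⟨k, hkK, hk⟩ := Set.mem_smul_set.mp hmem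
  have hk0 : k = (0 : E) := by
    calc k = (1 : Ω →ₘ[P] ℝ) • k := (one_smul _ _).symm
      _ = (ainv P Y * Y) • k := by rw [ainv_mul_self P hY]
      _ = ainv P Y • (Y • k) := mul_smul _ _ _
      _ = ainv P Y • (0 : E) := by rw [hk]
      _ = 0 := smul_zero _
  rwa [hk0] at hkK

end Aux

/-- `1_A · p_K(1_A X) = 1_A · p_K(X)` for an `L⁰`-convex, `L⁰`-absorbent `K`. -/
theorem stmt_4 {Ω : Type*} [MeasurableSpace Ω] (P : MeasureTheory.Measure Ω)
    [IsProbabilityMeasure P]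
    {E : Type*} [AddCommGroup E] [Module (Ω →ₘ[P] ℝ) E]
    (K : Set E) (hconv : IsL0Convex P K) (habs : IsL0Absorbent P K)
    (X : E) (A : Set Ω) (hA : MeasurableSet A)
    (a b : Ω →ₘ[P] ℝ) (ha : IsGLB (gaugeSet P K X) a)
    (hb : IsGLB (gaugeSet P K (ind P A hA • X)) b) :
    ind P A hA * b = ind P A hA * a := by
  set e : Ω →ₘ[P] ℝ := ind P A hA with hedef
  have he : ⇑e =ᵐ[P] A.indicator (fun _ => (1 : ℝ)) := ind_coe P A hA
  -- Direction 1 : e * b ≤ e * a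
  have hba : e * b ≤ e * a := by
    have hlb : ∀ Y ∈ gaugeSet P K X, e * b + (1 - e) * a ≤ Y := by
      rintro Y ⟨hY0, hYK⟩
      obtain ⟨k, hkK, hk⟩ := Set.mem_smul_set.mp hYK
      have hmem : e * Y ∈ gaugeSet P K (e • X) := by
        refine ⟨?_, Set.mem_smul_set.mpr ⟨k, hkK, ?_⟩⟩
        · rw [← AEEqFun.coeFn_le]
          filter_upwards [AEEqFun.coeFn_mul e Y, he,
            AEEqFun.coeFn_zero (β := ℝ) (μ := P), AEEqFun.coeFn_le.2 hY0,
            AEEqFun.coeFn_zero (β := ℝ) (μ := P)] with ω h1 h2 h3 h4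
          rw [h3, Pi.zero_apply, h1, Pi.mul_apply, h2]
          rw [h3, Pi.zero_apply] at h4
          by_cases hω : ω ∈ A
          · simpa [Set.indicator_of_mem hω] using h4
          · simp [Set.indicator_of_notMem hω]
        · rw [mul_smul, hk]
      have hbY : b ≤ e * Y := hb.1 hmem
      have haY : a ≤ Y := ha.1 ⟨hY0, hYK⟩
      rw [← AEEqFun.coeFn_le]
      filter_upwards [AEEqFun.coeFn_add (e * b) ((1 - e) * a), AEEqFun.coeFn_mul e b,
        AEEqFun.coeFn_mul (1 - e) a, AEEqFun.coeFn_sub (1 : Ω →ₘ[P] ℝ) e,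
        AEEqFun.coeFn_one (β := ℝ) (μ := P), he, AEEqFun.coeFn_le.2 hbY,
        AEEqFun.coeFn_le.2 haY, AEEqFun.coeFn_mul e Y] with ω h1 h2 h3 h4 h5 h6 h7 h8 h9
      rw [h1, Pi.add_apply, h2, h3, Pi.mul_apply, Pi.mul_apply, h4, Pi.sub_apply, h5,
        Pi.one_apply, h6]
      rw [h9, Pi.mul_apply, h6] at h7
      by_cases hω : ω ∈ A
      · rw [Set.indicator_of_mem hω] at h7 ⊢
        simpa using h7
      · rw [Set.indicator_of_notMem hω] at h7 ⊢
        simpa using h8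
    have hca : e * b + (1 - e) * a ≤ a := ha.2 hlb
    rw [← AEEqFun.coeFn_le]
    filter_upwards [AEEqFun.coeFn_le.2 hca, AEEqFun.coeFn_add (e * b) ((1 - e) * a),
      AEEqFun.coeFn_mul e b, AEEqFun.coeFn_mul (1 - e) a,
      AEEqFun.coeFn_sub (1 : Ω →ₘ[P] ℝ) e, AEEqFun.coeFn_one (β := ℝ) (μ := P), he,
      AEEqFun.coeFn_mul e a] with ω h0 h1 h2 h3 h4 h5 h6 h7
    rw [h1, Pi.add_apply, h2, h3, Pi.mul_apply, Pi.mul_apply, h4, Pi.sub_apply, h5,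
      Pi.one_apply, h6] at h0
    rw [h2, h7, Pi.mul_apply, Pi.mul_apply, h6]
    by_cases hω : ω ∈ A
    · rw [Set.indicator_of_mem hω] at h0 ⊢
      simp only [one_mul] at h0 ⊢
      linarith
    · rw [Set.indicator_of_notMem hω] at h0 ⊢
      simp
  -- Direction 2 : e * a ≤ e * b
  have hab : e * a ≤ e * b := by
    obtain ⟨Z, hZpos, hZmem⟩ := habs X
    obtain ⟨k', hk'K, hk'⟩ := Set.mem_smul_set.mp hZmem
    have hz : (0 : E) ∈ K := zero_mem_of_absorbent P habs
    -- bounds for 1 - e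
    have h0me : (0 : Ω →ₘ[P] ℝ) ≤ 1 - e := by
      rw [← AEEqFun.coeFn_le]
      filter_upwards [AEEqFun.coeFn_sub (1 : Ω →ₘ[P] ℝ) e,
        AEEqFun.coeFn_one (β := ℝ) (μ := P), he,
        AEEqFun.coeFn_zero (β := ℝ) (μ := P)] with ω h1 h2 h3 h4
      rw [h4, Pi.zero_apply, h1, Pi.sub_apply, h2, Pi.one_apply, h3]
      by_cases hω : ω ∈ A <;> simp [Set.indicator_of_mem, Set.indicator_of_notMem, hω]
    have hme1 : 1 - e ≤ 1 := by
      rw [← AEEqFun.coeFn_le]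
      filter_upwards [AEEqFun.coeFn_sub (1 : Ω →ₘ[P] ℝ) e,
        AEEqFun.coeFn_one (β := ℝ) (μ := P), he] with ω h1 h2 h3
      rw [h1, Pi.sub_apply, h2, Pi.one_apply, h3]
      by_cases hω : ω ∈ A <;> simp [Set.indicator_of_mem, Set.indicator_of_notMem, hω]
    have hw : (1 - e) • k' ∈ K := by
      have := hconv k' hk'K 0 hz (1 - e) h0me hme1
      simpa using this
    have hlb : ∀ Y ∈ gaugeSet P K (e • X), e * a ≤ e * Y := by
      rintro Y ⟨hY0, hYK⟩
      obtain ⟨k, hkK, hk⟩ := Set.mem_smul_set.mp hYK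
      have key : ∀ n : ℕ, ∀ᵐ ω ∂P, (e * a) ω ≤ (e * Y) ω + 1 / (n + 1) := by
        intro n
        set ε : ℝ := 1 / (n + 1) with hεdef
        have hεpos : (0 : ℝ) < ε := by positivity
        -- the auxiliary scalar W
        set Wf : Ω → ℝ :=
          A.indicator (fun ω => Y ω + ε) + Aᶜ.indicator (fun ω => Z ω) with hWfdef
        have hWm : AEStronglyMeasurable Wf P :=
          ((Y.aestronglyMeasurable.add aestronglyMeasurable_const).indicator hA).add
            (Z.aestronglyMeasurable.indicator hA.compl)
        set W : Ω →ₘ[P] ℝ := AEEqFun.mk Wf hWm with hWdef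
        have hWcoe : ⇑W =ᵐ[P] Wf := AEEqFun.coeFn_mk _ _
        have hWfA : ∀ ω ∈ A, Wf ω = Y ω + ε := by
          intro ω hω
          simp [hWfdef, Pi.add_apply, Set.indicator_of_mem hω,
            Set.indicator_of_notMem (show ω ∉ Aᶜ from fun h => h hω)]
        have hWfA' : ∀ ω ∉ A, Wf ω = Z ω := by
          intro ω hω
          simp [hWfdef, Pi.add_apply, Set.indicator_of_notMem hω,
            Set.indicator_of_mem (show ω ∈ Aᶜ from hω)]
        -- the scalar λ
        set lf : Ω → ℝ := A.indicator (fun ω => Y ω / (Y ω + ε)) with hlfdef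
        have hlm : AEStronglyMeasurable lf P :=
          ((Y.aestronglyMeasurable.aemeasurable.div
            (Y.aestronglyMeasurable.aemeasurable.add aemeasurable_const)).indicator
              hA).aestronglyMeasurable
        set lam : Ω →ₘ[P] ℝ := AEEqFun.mk lf hlm with hlamdef
        have hlcoe : ⇑lam =ᵐ[P] lf := AEEqFun.coeFn_mk _ _
        have hY0' : ∀ᵐ ω ∂P, 0 ≤ Y ω := by
          filter_upwards [AEEqFun.coeFn_le.2 hY0, AEEqFun.coeFn_zero (β := ℝ) (μ := P)]
            with ω h1 h2
          rw [h2, Pi.zero_apply] at h1; exact h1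
        have h0lam : (0 : Ω →ₘ[P] ℝ) ≤ lam := by
          rw [← AEEqFun.coeFn_le]
          filter_upwards [hlcoe, hY0', AEEqFun.coeFn_zero (β := ℝ) (μ := P)]
            with ω h1 h2 h3
          rw [h3, Pi.zero_apply, h1, hlfdef]
          by_cases hω : ω ∈ A
          · rw [Set.indicator_of_mem hω]
            positivity
          · rw [Set.indicator_of_notMem hω]
        have hlam1 : lam ≤ 1 := by
          rw [← AEEqFun.coeFn_le]
          filter_upwards [hlcoe, hY0', AEEqFun.coeFn_one (β := ℝ) (μ := P)]
            with ω h1 h2 h3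
          rw [h3, Pi.one_apply, h1, hlfdef]
          by_cases hω : ω ∈ A
          · rw [Set.indicator_of_mem hω]
            rw [div_le_one (by linarith)]
            linarith
          · rw [Set.indicator_of_notMem hω]
            norm_num
        have hk'' : lam • k + (1 - lam) • ((1 - e) • k') ∈ K :=
          hconv k hkK _ hw lam h0lam hlam1
        -- W • (that element) = X
        have hWl : W * lam = e * Y := by
          apply AEEqFun.ext
          filter_upwards [AEEqFun.coeFn_mul W lam, hWcoe, hlcoe, hY0',
            AEEqFun.coeFn_mul e Y, he] with ω h1 h2 h3 h4 h5 h6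
          rw [h1, Pi.mul_apply, h2, h3, h5, Pi.mul_apply, h6]
          by_cases hω : ω ∈ A
          · rw [hWfA ω hω, hlfdef, Set.indicator_of_mem hω, Set.indicator_of_mem hω]
            field_simp
          · rw [hlfdef, Set.indicator_of_notMem hω, Set.indicator_of_notMem hω]
            ring
        have hWl2 : W * ((1 - lam) * (1 - e)) = (1 - e) * Z := by
          apply AEEqFun.ext
          filter_upwards [AEEqFun.coeFn_mul W ((1 - lam) * (1 - e)),
            AEEqFun.coeFn_mul (1 - lam) (1 - e), AEEqFun.coeFn_sub (1 : Ω →ₘ[P] ℝ) lam,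
            AEEqFun.coeFn_sub (1 : Ω →ₘ[P] ℝ) e, AEEqFun.coeFn_one (β := ℝ) (μ := P),
            hWcoe, hlcoe, he, AEEqFun.coeFn_mul (1 - e) Z] with ω h1 h2 h3 h4 h5 h6 h7 h8 h9
          rw [h1, Pi.mul_apply, h2, Pi.mul_apply, h3, Pi.sub_apply, h4, Pi.sub_apply,
            h5, Pi.one_apply, h6, h7, h8, h9, Pi.mul_apply, h4, Pi.sub_apply, h5,
            Pi.one_apply, h8]
          by_cases hω : ω ∈ A
          · rw [Set.indicator_of_mem hω]; ring
          · rw [hWfA' ω hω, hlfdef, Set.indicator_of_notMem hω,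
              Set.indicator_of_notMem hω]
            ring
        have hee : e * e = e := by
          apply AEEqFun.ext
          filter_upwards [AEEqFun.coeFn_mul e e, he] with ω h1 h2
          rw [h1, Pi.mul_apply, h2]
          by_cases hω : ω ∈ A <;>
            simp [Set.indicator_of_mem, Set.indicator_of_notMem, hω]
        have hX : X = (e * Y) • k + ((1 - e) * Z) • k' := by
          have h1 : X = e • X + (1 - e) • X := by
            rw [← add_smul]
            have : e + (1 - e) = (1 : Ω →ₘ[P] ℝ) := by ring
            rw [this, one_smul]
          have h2 : e • X = (e * Y) • k := by
            calc e • X = (e * e) • X := by rw [hee]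
              _ = e • (e • X) := mul_smul _ _ _
              _ = e • (Y • k) := by rw [hk]
              _ = (e * Y) • k := (mul_smul _ _ _).symm
          have h3 : (1 - e) • X = ((1 - e) * Z) • k' := by
            rw [← hk', ← mul_smul]
          rw [h1, h2, h3]
        have hWX : X ∈ W • K := by
          refine Set.mem_smul_set.mpr ⟨_, hk'', ?_⟩
          rw [smul_add, ← mul_smul, ← mul_smul, ← mul_smul, mul_assoc, hWl, hWl2, ← hX]
        have hW0 : (0 : Ω →ₘ[P] ℝ) ≤ W := by
          rw [← AEEqFun.coeFn_le]
          filter_upwards [hWcoe, hY0', hZpos, AEEqFun.coeFn_zero (β := ℝ) (μ := P)]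
            with ω h1 h2 h3 h4
          rw [h4, Pi.zero_apply, h1]
          by_cases hω : ω ∈ A
          · rw [hWfA ω hω]; linarith
          · rw [hWfA' ω hω]; linarith
        have haW : a ≤ W := ha.1 ⟨hW0, hWX⟩
        filter_upwards [AEEqFun.coeFn_le.2 haW, hWcoe, AEEqFun.coeFn_mul e a,
          AEEqFun.coeFn_mul e Y, he] with ω h1 h2 h3 h4 h5
        rw [h3, h4, Pi.mul_apply, Pi.mul_apply, h5]
        rw [h2] at h1
        by_cases hω : ω ∈ A
        · rw [hWfA ω hω] at h1
          rw [Set.indicator_of_mem hω]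
          simpa using h1
        · rw [Set.indicator_of_notMem hω]
          simp [le_of_lt hεpos]
      rw [← AEEqFun.coeFn_le]
      filter_upwards [ae_all_iff.mpr key] with ω hω
      by_contra hcon
      push_neg at hcon
      obtain ⟨n, hn⟩ := exists_nat_one_div_lt (sub_pos.mpr hcon)
      have := hω n
      linarith
    have hlb' : ∀ Y ∈ gaugeSet P K (e • X), e * a + (1 - e) * b ≤ Y := by
      intro Y hY
      have h1 := hlb Y hY
      have h2 : b ≤ Y := hb.1 hY
      rw [← AEEqFun.coeFn_le]
      filter_upwards [AEEqFun.coeFn_le.2 h1, AEEqFun.coeFn_le.2 h2,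
        AEEqFun.coeFn_add (e * a) ((1 - e) * b), AEEqFun.coeFn_mul e a,
        AEEqFun.coeFn_mul (1 - e) b, AEEqFun.coeFn_sub (1 : Ω →ₘ[P] ℝ) e,
        AEEqFun.coeFn_one (β := ℝ) (μ := P), he, AEEqFun.coeFn_mul e Y]
        with ω h3 h4 h5 h6 h7 h8 h9 h10 h11
      rw [h5, Pi.add_apply, h6, h7, Pi.mul_apply, Pi.mul_apply, h8, Pi.sub_apply, h9,
        Pi.one_apply, h10]
      rw [h6, h11, Pi.mul_apply, Pi.mul_apply, h10] at h3
      by_cases hω : ω ∈ A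
      · rw [Set.indicator_of_mem hω] at h3 ⊢
        simp only [one_mul] at h3 ⊢
        linarith
      · rw [Set.indicator_of_notMem hω] at h3 ⊢
        simpa using h4
    have hcb : e * a + (1 - e) * b ≤ b := hb.2 hlb'
    rw [← AEEqFun.coeFn_le]
    filter_upwards [AEEqFun.coeFn_le.2 hcb, AEEqFun.coeFn_add (e * a) ((1 - e) * b),
      AEEqFun.coeFn_mul e a, AEEqFun.coeFn_mul (1 - e) b,
      AEEqFun.coeFn_sub (1 : Ω →ₘ[P] ℝ) e, AEEqFun.coeFn_one (β := ℝ) (μ := P), he,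
      AEEqFun.coeFn_mul e b] with ω h0 h1 h2 h3 h4 h5 h6 h7
    rw [h1, Pi.add_apply, h2, h3, Pi.mul_apply, Pi.mul_apply, h4, Pi.sub_apply, h5,
      Pi.one_apply, h6] at h0
    rw [h2, h7, Pi.mul_apply, Pi.mul_apply, h6]
    by_cases hω : ω ∈ A
    · rw [Set.indicator_of_mem hω] at h0 ⊢
      simp only [one_mul] at h0 ⊢
      linarith
    · rw [Set.indicator_of_notMem hω] at h0 ⊢
      simp
  exact le_antisymm hba hab
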